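/- arXiv:0809.2506 — 3 statements merged into one kernel-verified Lean document; each statement's English description precedes it below -/
import Mathlib

section
/- For every μ ∈ ℝ, the function f : ℝ → ℝ defined by f(x) = K_μ(e^{−x}) is twice differentiable and satisfies f''(x) = (e^{−2x} + μ²) f(x) for all x ∈ ℝ. -/
open Real

/-- The Macdonald function `K_μ(z) = (1/2) (z/2)^μ ∫_0^∞ t^{-1-μ} exp(-t - z²/(4t)) dt`. -/
noncomputable def macdonaldK (μ z : ℝ) : ℝ :=
  (1 / 2) * (z / 2) ^ μ *
    ∫ t in Set.Ioi (0 : ℝ), t ^ (-1 - μ) * Real.exp (-t - z ^ 2 / (4 * t))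

set_option maxHeartbeats 1000000

open Real MeasureTheory Set Filter Topology

noncomputable def Jf (ν c : ℝ) : ℝ :=
  ∫ t in Set.Ioi (0 : ℝ), t ^ (-1 - ν) * Real.exp (-t - c / t)

lemma measAux (ν x : ℝ) :
    AEStronglyMeasurable (fun t : ℝ => t ^ (-1 - ν) * Real.exp (-t - x / t))
      (volume.restrict (Ioi 0)) := by
  apply ContinuousOn.aestronglyMeasurable ?_ measurableSet_Ioi
  apply ContinuousOn.mul
  · exact fun t ht => (Real.continuousAt_rpow_const t _ (Or.inl (ne_of_gt ht))).continuousWithinAt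
  · refine Real.continuous_exp.comp_continuousOn ?_
    exact (continuous_neg.continuousOn).sub
      (continuousOn_const.div continuousOn_id fun t ht => ne_of_gt ht)

/-- bound near zero: `t^(-a) * exp(-(c/t)) ≤ n!/c^n` for `0 < t ≤ 1`, `a ≤ n`. -/
lemma bound_aux {a : ℝ} {n : ℕ} (hn : a ≤ n) {c t : ℝ} (hc : 0 < c) (ht : 0 < t)
    (ht1 : t ≤ 1) : t ^ (-a) * Real.exp (-(c / t)) ≤ n.factorial / c ^ n := by
  have hs : (1:ℝ) ≤ t⁻¹ := (one_le_inv_iff₀).2 ⟨ht, ht1⟩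
  have h1 : t ^ (-a) = t⁻¹ ^ a := by
    rw [Real.inv_rpow ht.le, Real.rpow_neg ht.le]
  have h2 : t⁻¹ ^ a ≤ t⁻¹ ^ (n : ℝ) := Real.rpow_le_rpow_of_exponent_le hs hn
  have h3 : t⁻¹ ^ (n : ℝ) = t⁻¹ ^ n := Real.rpow_natCast _ _
  have hcs : 0 < c * t⁻¹ := mul_pos hc (inv_pos.2 ht)
  have h4 : (c * t⁻¹) ^ n ≤ Real.exp (c * t⁻¹) * n.factorial := by
    have := Real.pow_div_factorial_le_exp (x := c * t⁻¹) hcs.le n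
    rw [div_le_iff₀ (by positivity)] at this
    exact this
  have h5 : Real.exp (-(c / t)) = (Real.exp (c * t⁻¹))⁻¹ := by
    rw [Real.exp_neg, div_eq_mul_inv]
  have hexp : 0 < Real.exp (c * t⁻¹) := Real.exp_pos _
  have h6 : t⁻¹ ^ n * (Real.exp (c * t⁻¹))⁻¹ ≤ n.factorial / c ^ n := by
    have e1 : t⁻¹ ^ n = (c * t⁻¹) ^ n / c ^ n := by rw [mul_pow]; field_simp
    calc t⁻¹ ^ n * (Real.exp (c * t⁻¹))⁻¹
        = (c * t⁻¹) ^ n / c ^ n * (Real.exp (c * t⁻¹))⁻¹ := by rw [e1]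
      _ ≤ Real.exp (c * t⁻¹) * n.factorial / c ^ n * (Real.exp (c * t⁻¹))⁻¹ := by
          gcongr
      _ = n.factorial / c ^ n := by field_simp
  calc t ^ (-a) * Real.exp (-(c / t)) ≤ t⁻¹ ^ n * Real.exp (-(c / t)) := by
        apply mul_le_mul_of_nonneg_right _ (Real.exp_pos _).le
        rw [h1]; rw [h3] at h2; exact h2
    _ = t⁻¹ ^ n * (Real.exp (c * t⁻¹))⁻¹ := by rw [h5]
    _ ≤ n.factorial / c ^ n := h6

lemma integrableJ (ν : ℝ) {c : ℝ} (hc : 0 < c) :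
    IntegrableOn (fun t : ℝ => t ^ (-1 - ν) * Real.exp (-t - c / t)) (Ioi 0) := by
  rw [← Ioc_union_Ioi_eq_Ioi (zero_le_one' ℝ), integrableOn_union]
  constructor
  · -- bounded on (0,1]
    set n : ℕ := ⌈1 + ν⌉₊ with hn
    apply Integrable.mono (g := fun _ => (n.factorial / c ^ n : ℝ))
      (integrableOn_const (measure_Ioc_lt_top.ne))
      ((measAux ν c).mono_measure (Measure.restrict_mono Ioc_subset_Ioi_self le_rfl))
    · have hM : (0:ℝ) ≤ n.factorial / c ^ n := by positivity
      filter_upwards [ae_restrict_mem measurableSet_Ioc] with t ht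
      rw [Real.norm_eq_abs (n.factorial / c ^ n), abs_of_nonneg hM]
      obtain ⟨ht0, ht1⟩ := ht
      have hE : Real.exp (-t - c / t) ≤ Real.exp (-(c / t)) := by
        apply Real.exp_le_exp.2; have := ht0.le; linarith [div_nonneg hc.le ht0.le]
      have h0 : (0:ℝ) < t ^ (-1 - ν) := Real.rpow_pos_of_pos ht0 _
      rw [Real.norm_eq_abs, abs_of_nonneg (by positivity)]
      calc t ^ (-1 - ν) * Real.exp (-t - c / t)
          ≤ t ^ (-1 - ν) * Real.exp (-(c / t)) := by
            exact mul_le_mul_of_nonneg_left hE h0.le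
        _ = t ^ (-(1 + ν)) * Real.exp (-(c / t)) := by rw [show -(1+ν) = -1-ν by ring]
        _ ≤ n.factorial / c ^ n := bound_aux (Nat.le_ceil _) hc ht0 ht1
  · -- tail: compare with Gamma integrand
    set s : ℝ := max 1 (-ν) with hs
    have hs0 : 0 < s := lt_of_lt_of_le one_pos (le_max_left _ _)
    have hG : IntegrableOn (fun t : ℝ => Real.exp (-t) * t ^ (s - 1)) (Ioi 1) :=
      (Real.GammaIntegral_convergent hs0).mono_set (Ioi_subset_Ioi zero_le_one)
    apply hG.integrable.mono
      ((measAux ν c).mono_measure (Measure.restrict_mono (Ioi_subset_Ioi zero_le_one) le_rfl))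
    filter_upwards [ae_restrict_mem measurableSet_Ioi] with t ht
    have ht1 : (1:ℝ) ≤ t := le_of_lt ht
    have ht0 : (0:ℝ) < t := lt_of_lt_of_le one_pos ht1
    have h1 : t ^ (-1 - ν) ≤ t ^ (s - 1) :=
      Real.rpow_le_rpow_of_exponent_le ht1 (by
        have := le_max_right (1:ℝ) (-ν); simp only [hs]; linarith)
    have h2 : Real.exp (-t - c / t) ≤ Real.exp (-t) := by
      apply Real.exp_le_exp.2; linarith [div_nonneg hc.le ht0.le]
    rw [Real.norm_eq_abs, Real.norm_eq_abs, abs_of_nonneg (by positivity),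
      abs_of_nonneg (by positivity)]
    calc t ^ (-1 - ν) * Real.exp (-t - c / t) ≤ t ^ (s - 1) * Real.exp (-t) := by
          apply mul_le_mul h1 h2 (Real.exp_pos _).le (Real.rpow_pos_of_pos ht0 _).le
      _ = Real.exp (-t) * t ^ (s - 1) := mul_comm _ _

lemma rpow_shift {t : ℝ} (ht : 0 < t) (a : ℝ) : t ^ a * t⁻¹ = t ^ (a - 1) := by
  rw [← Real.rpow_neg_one t, ← Real.rpow_add ht, sub_eq_add_neg]

lemma hasDerivAt_Jf (ν : ℝ) {c : ℝ} (hc : 0 < c) :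
    HasDerivAt (Jf ν) (-Jf (ν + 1) c) c := by
  have hc2 : (0:ℝ) < c / 2 := by linarith
  have key := hasDerivAt_integral_of_dominated_loc_of_deriv_le
    (F := fun x t => t ^ (-1 - ν) * Real.exp (-t - x / t))
    (F' := fun x t => -(t ^ (-1 - (ν + 1)) * Real.exp (-t - x / t)))
    (x₀ := c) (s := Metric.ball c (c / 2))
    (bound := fun t => t ^ (-1 - (ν + 1)) * Real.exp (-t - (c / 2) / t))
    (μ := volume.restrict (Ioi 0)) (Metric.ball_mem_nhds c hc2)
    (Eventually.of_forall fun x => measAux ν x)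
    (integrableJ ν hc)
    ((measAux (ν + 1) c).neg)
    ?_ (integrableJ (ν + 1) hc2) ?_
  · have : (fun x => ∫ t in Ioi (0:ℝ), t ^ (-1 - ν) * Real.exp (-t - x / t)) = Jf ν := rfl
    rw [this] at key
    have h2 : ∫ t in Ioi (0:ℝ), -(t ^ (-1 - (ν + 1)) * Real.exp (-t - c / t))
        = -Jf (ν + 1) c := by
      rw [integral_neg]; rfl
    rw [h2] at key
    exact key.2
  · -- bound
    filter_upwards [ae_restrict_mem measurableSet_Ioi] with t ht x hx
    have ht0 : (0:ℝ) < t := ht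
    have hx2 : c / 2 ≤ x := by
      have := abs_lt.1 (mem_ball_iff_norm.1 hx)
      linarith [this.1]
    have hp : (0:ℝ) < t ^ (-1 - (ν + 1)) := Real.rpow_pos_of_pos ht0 _
    rw [norm_neg, Real.norm_eq_abs, abs_of_nonneg (by positivity)]
    apply mul_le_mul_of_nonneg_left _ hp.le
    apply Real.exp_le_exp.2
    have : c / 2 / t ≤ x / t := by gcongr
    linarith
  · -- differentiability
    filter_upwards [ae_restrict_mem measurableSet_Ioi] with t ht x _
    have ht0 : (0:ℝ) < t := ht
    have hinner : HasDerivAt (fun x : ℝ => -t - x / t) (-(1 / t)) x := by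
      have h1 : HasDerivAt (fun x : ℝ => x / t) (1 / t) x := by
        simpa using (hasDerivAt_id x).div_const t
      simpa using h1.const_sub (-t)
    have hE : HasDerivAt (fun x : ℝ => Real.exp (-t - x / t))
        (Real.exp (-t - x / t) * (-(1 / t))) x := hinner.exp
    have := hE.const_mul (t ^ (-1 - ν))
    convert this using 1 <;> try rfl
    rw [one_div, show (-1 - (ν + 1)) = (-1 - ν) - 1 by ring, ← rpow_shift ht0]
    ring

lemma Jf_rec (ν : ℝ) {c : ℝ} (hc : 0 < c) :
    c * Jf (ν + 1) c = Jf (ν - 1) c + ν * Jf ν c := by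
  set g : ℝ → ℝ := fun t => t ^ (-ν) * Real.exp (-t - c / t) with hg
  set g' : ℝ → ℝ := fun t =>
      (-ν) * (t ^ (-1 - ν) * Real.exp (-t - c / t)) +
      (-1) * (t ^ (-1 - (ν - 1)) * Real.exp (-t - c / t)) +
      c * (t ^ (-1 - (ν + 1)) * Real.exp (-t - c / t)) with hg'
  have hg'int : IntegrableOn g' (Ioi 0) :=
    (((integrableJ ν hc).const_mul (-ν)).add
      ((integrableJ (ν - 1) hc).const_mul (-1))).add
      ((integrableJ (ν + 1) hc).const_mul c)
  have hderiv : ∀ t : ℝ, 0 < t → HasDerivAt g (g' t) t := by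
    intro t ht
    have hp : HasDerivAt (fun t : ℝ => t ^ (-ν)) (-ν * t ^ (-ν - 1)) t :=
      Real.hasDerivAt_rpow_const (Or.inl ht.ne')
    have hinv : HasDerivAt (fun t : ℝ => c / t) (c * -(t ^ 2)⁻¹) t := by
      simpa [div_eq_mul_inv] using (hasDerivAt_inv ht.ne').const_mul c
    have hin : HasDerivAt (fun t : ℝ => -t - c / t) (-1 - c * -(t ^ 2)⁻¹) t :=
      (hasDerivAt_id t).neg.sub hinv
    have hE : HasDerivAt (fun t : ℝ => Real.exp (-t - c / t))
        (Real.exp (-t - c / t) * (-1 - c * -(t ^ 2)⁻¹)) t := hin.exp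
    have hmul := hp.mul hE
    convert hmul using 1 <;> try rfl
    have e1 : t ^ (-ν - 1) = t ^ (-1 - ν) := by rw [show -ν - 1 = -1 - ν by ring]
    have e2 : t ^ (-ν) = t ^ (-1 - (ν - 1)) := by rw [show -ν = -1 - (ν - 1) by ring]
    have e3 : t ^ (-ν) * (t ^ 2)⁻¹ = t ^ (-1 - (ν + 1)) := by
      rw [show ((t:ℝ) ^ 2) = t ^ ((2:ℕ):ℝ) from (Real.rpow_natCast t 2).symm,
        ← Real.rpow_neg ht.le, ← Real.rpow_add ht]
      congr 1; push_cast; ring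
    try simp only [hg']
    rw [e1] at *
    calc (-ν) * (t ^ (-1 - ν) * Real.exp (-t - c / t)) +
          (-1) * (t ^ (-1 - (ν - 1)) * Real.exp (-t - c / t)) +
          c * (t ^ (-1 - (ν + 1)) * Real.exp (-t - c / t))
        = (-ν) * (t ^ (-1 - ν) * Real.exp (-t - c / t)) +
          (-1) * (t ^ (-ν) * Real.exp (-t - c / t)) +
          c * ((t ^ (-ν) * (t ^ 2)⁻¹) * Real.exp (-t - c / t)) := by rw [← e2, e3]
      _ = -ν * t ^ (-1 - ν) * Real.exp (-t - c / t) +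
          t ^ (-ν) * (Real.exp (-t - c / t) * (-1 - c * -(t ^ 2)⁻¹)) := by ring
  -- limit of g at infinity
  have htop : Tendsto g atTop (𝓝 0) := by
    have h1 := tendsto_rpow_mul_exp_neg_mul_atTop_nhds_zero (-ν) 1 one_pos
    have h2 : Tendsto (fun t : ℝ => Real.exp (-(c / t))) atTop (𝓝 1) := by
      have h3 : Tendsto (fun t : ℝ => -(c / t)) atTop (𝓝 0) := by
        simpa using (Tendsto.div_atTop (tendsto_const_nhds (x := c)) tendsto_id).neg
      simpa [Function.comp_def] using (Real.continuous_exp.tendsto 0).comp h3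
    have := h1.mul h2
    rw [mul_one] at this
    apply this.congr
    intro t
    show t ^ (-ν) * Real.exp (-1 * t) * Real.exp (-(c / t)) = t ^ (-ν) * Real.exp (-t - c / t)
    rw [show -t - c / t = -1 * t + -(c / t) by ring, Real.exp_add]
    ring
  -- limit of g at zero (from the right)
  have hzero : Tendsto g (𝓝[>] (0:ℝ)) (𝓝 0) := by
    have hk : Tendsto (fun t : ℝ => (t⁻¹) ^ ν * Real.exp (-c * t⁻¹)) (𝓝[>] (0:ℝ)) (𝓝 0) := by
      simpa [Function.comp_def] using
        (tendsto_rpow_mul_exp_neg_mul_atTop_nhds_zero ν c hc).comp tendsto_inv_nhdsGT_zero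
    have h2 : Tendsto (fun t : ℝ => Real.exp (-t)) (𝓝[>] (0:ℝ)) (𝓝 1) := by
      have : Tendsto (fun t : ℝ => Real.exp (-t)) (𝓝 (0:ℝ)) (𝓝 1) := by
        simpa [Function.comp_def] using (Real.continuous_exp.comp continuous_neg).tendsto 0
      exact this.mono_left nhdsWithin_le_nhds
    have := hk.mul h2
    rw [mul_one] at this
    apply this.congr' _
    filter_upwards [self_mem_nhdsWithin] with t (ht : 0 < t)
    show (t⁻¹) ^ ν * Real.exp (-c * t⁻¹) * Real.exp (-t) = t ^ (-ν) * Real.exp (-t - c / t)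
    have e1 : (t⁻¹) ^ ν = t ^ (-ν) := by
      rw [Real.rpow_neg ht.le, Real.inv_rpow ht.le]
    rw [e1, mul_assoc, ← Real.exp_add,
      show -c * t⁻¹ + -t = -t - c / t by rw [div_eq_mul_inv]; ring]
  -- FTC on (a, ∞) for every a > 0
  have hint : ∀ a : ℝ, 0 < a → ∫ t in Ioi a, g' t = 0 - g a := by
    intro a ha
    exact integral_Ioi_of_hasDerivAt_of_tendsto'
      (fun t htt => hderiv t (lt_of_lt_of_le ha htt))
      (hg'int.mono_set (Ioi_subset_Ioi ha.le)) htop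
  -- pass to the limit a → 0⁺
  have hUnion : (⋃ n : ℕ, Ioi ((1:ℝ) / (n + 1))) = Ioi (0:ℝ) := by
    ext x
    simp only [mem_iUnion, mem_Ioi]
    constructor
    · rintro ⟨n, hn⟩; exact lt_trans (by positivity) hn
    · intro hx; obtain ⟨n, hn⟩ := exists_nat_one_div_lt hx; exact ⟨n, hn⟩
  have hmono : Monotone fun n : ℕ => Ioi ((1:ℝ) / (n + 1)) := by
    intro m n hmn
    apply Ioi_subset_Ioi
    have h1 : (0:ℝ) < m + 1 := by positivity
    apply one_div_le_one_div_of_le h1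
    have : (m:ℝ) ≤ n := Nat.cast_le.2 hmn
    linarith
  have htend := tendsto_setIntegral_of_monotone (fun i => measurableSet_Ioi) hmono
    (by rw [hUnion]; exact hg'int)
  rw [hUnion] at htend
  have hseq : Tendsto (fun n : ℕ => (1:ℝ) / (n + 1)) atTop (𝓝[>] (0:ℝ)) := by
    apply tendsto_nhdsWithin_of_tendsto_nhds_of_eventually_within
    · exact tendsto_one_div_add_atTop_nhds_zero_nat
    · exact Eventually.of_forall fun n => mem_Ioi.2 (by positivity)
  have hlim2 : Tendsto (fun n : ℕ => ∫ t in Ioi ((1:ℝ) / (n + 1)), g' t) atTop (𝓝 (0 - 0)) := by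
    have := (hzero.comp hseq).const_sub 0
    apply Tendsto.congr _ this
    intro n
    simp only [Function.comp]
    exact (hint _ (by positivity)).symm
  have hzero' : ∫ t in Ioi (0:ℝ), g' t = 0 := by
    have := tendsto_nhds_unique htend hlim2
    simpa using this
  -- unpack linearity
  have hI : ∫ t in Ioi (0:ℝ), g' t
      = (-ν) * Jf ν c + (-1) * Jf (ν - 1) c + c * Jf (ν + 1) c := by
    have I1 := (integrableJ ν hc).const_mul (-ν)
    have I2 := (integrableJ (ν - 1) hc).const_mul (-1)
    have I3 := (integrableJ (ν + 1) hc).const_mul c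
    have e1 : ∫ t in Ioi (0:ℝ), g' t
        = (∫ t in Ioi (0:ℝ), ((-ν) * (t ^ (-1 - ν) * Real.exp (-t - c / t))
            + (-1) * (t ^ (-1 - (ν - 1)) * Real.exp (-t - c / t))))
          + ∫ t in Ioi (0:ℝ), c * (t ^ (-1 - (ν + 1)) * Real.exp (-t - c / t)) :=
      integral_add (I1.add I2) I3
    have e2 : ∫ t in Ioi (0:ℝ), ((-ν) * (t ^ (-1 - ν) * Real.exp (-t - c / t))
            + (-1) * (t ^ (-1 - (ν - 1)) * Real.exp (-t - c / t)))
        = (∫ t in Ioi (0:ℝ), (-ν) * (t ^ (-1 - ν) * Real.exp (-t - c / t)))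
          + ∫ t in Ioi (0:ℝ), (-1) * (t ^ (-1 - (ν - 1)) * Real.exp (-t - c / t)) :=
      integral_add I1 I2
    rw [e1, e2, integral_const_mul, integral_const_mul, integral_const_mul]
    rfl
  rw [hzero'] at hI
  linarith

noncomputable def Ff (μ x : ℝ) : ℝ :=
  1 / 2 * (2:ℝ) ^ (-μ) * (Real.exp (-μ * x) * Jf μ (Real.exp (-2 * x) / 4))

noncomputable def Ff1 (μ x : ℝ) : ℝ :=
  1 / 2 * (2:ℝ) ^ (-μ) * (Real.exp (-μ * x) *
    (μ * Jf μ (Real.exp (-2 * x) / 4) + 2 * Jf (μ - 1) (Real.exp (-2 * x) / 4)))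

lemma hasDerivAt_c (x : ℝ) :
    HasDerivAt (fun x : ℝ => Real.exp (-2 * x) / 4) (-2 * (Real.exp (-2 * x) / 4)) x := by
  have h1 : HasDerivAt (fun x : ℝ => -2 * x) (-2) x := by
    simpa using (hasDerivAt_id x).const_mul (-2 : ℝ)
  have := (h1.exp).div_const 4
  convert this using 1 <;> try rfl
  ring

lemma hasDerivAt_Jc (ν x : ℝ) :
    HasDerivAt (fun x : ℝ => Jf ν (Real.exp (-2 * x) / 4))
      (Real.exp (-2 * x) / 2 * Jf (ν + 1) (Real.exp (-2 * x) / 4)) x := by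
  have hc : (0:ℝ) < Real.exp (-2 * x) / 4 := by positivity
  have := (hasDerivAt_Jf ν hc).comp x (hasDerivAt_c x)
  convert this using 1 <;> try rfl
  ring

lemma hasDerivAt_exmu (μ x : ℝ) :
    HasDerivAt (fun x : ℝ => Real.exp (-μ * x)) (-μ * Real.exp (-μ * x)) x := by
  have h1 : HasDerivAt (fun x : ℝ => -μ * x) (-μ) x := by
    simpa using (hasDerivAt_id x).const_mul (-μ)
  simpa [mul_comm] using h1.exp

lemma hasDerivAt_Ff (μ x : ℝ) : HasDerivAt (Ff μ) (Ff1 μ x) x := by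
  have hc : (0:ℝ) < Real.exp (-2 * x) / 4 := by positivity
  set C : ℝ := Real.exp (-2 * x) / 4 with hC
  have h := ((hasDerivAt_exmu μ x).mul (hasDerivAt_Jc μ x)).const_mul
    (1 / 2 * (2:ℝ) ^ (-μ))
  have hrec : C * Jf (μ + 1) C = Jf (μ - 1) C + μ * Jf μ C := Jf_rec μ hc
  convert h using 1 <;> try rfl
  show Ff1 μ x = _
  rw [Ff1]
  have h4 : Real.exp (-2 * x) / 2 * Jf (μ + 1) C = 2 * (C * Jf (μ + 1) C) := by
    rw [hC]; ring
  rw [h4, hrec]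
  ring

lemma hasDerivAt_Ff1 (μ x : ℝ) :
    HasDerivAt (Ff1 μ) ((Real.exp (-2 * x) + μ ^ 2) * Ff μ x) x := by
  have hc : (0:ℝ) < Real.exp (-2 * x) / 4 := by positivity
  set C : ℝ := Real.exp (-2 * x) / 4 with hC
  have hin : HasDerivAt (fun x : ℝ =>
      μ * Jf μ (Real.exp (-2 * x) / 4) + 2 * Jf (μ - 1) (Real.exp (-2 * x) / 4))
      (μ * (Real.exp (-2 * x) / 2 * Jf (μ + 1) C)
        + 2 * (Real.exp (-2 * x) / 2 * Jf (μ - 1 + 1) C)) x :=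
    ((hasDerivAt_Jc μ x).const_mul μ).add ((hasDerivAt_Jc (μ - 1) x).const_mul 2)
  have h := ((hasDerivAt_exmu μ x).mul hin).const_mul (1 / 2 * (2:ℝ) ^ (-μ))
  have hrec : C * Jf (μ + 1) C = Jf (μ - 1) C + μ * Jf μ C := Jf_rec μ hc
  convert h using 1 <;> try rfl
  rw [Ff]
  have e1 : (μ - 1 + 1) = μ := by ring
  rw [e1]
  have h4 : Real.exp (-2 * x) / 2 * Jf (μ + 1) C = 2 * (Jf (μ - 1) C + μ * Jf μ C) := by
    rw [← hrec, hC]; ring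
  rw [h4]
  have h5 : Real.exp (-2 * x) = 4 * C := by rw [hC]; ring
  rw [h5]
  ring

lemma macd_eq_Ff (μ : ℝ) : (fun x : ℝ => macdonaldK μ (Real.exp (-x))) = Ff μ := by
  funext x
  rw [macdonaldK, Ff, Jf]
  have h1 : (Real.exp (-x) / 2) ^ μ = (2:ℝ) ^ (-μ) * Real.exp (-μ * x) := by
    rw [Real.div_rpow (Real.exp_pos _).le (by norm_num : (0:ℝ) ≤ 2),
      Real.rpow_def_of_pos (Real.exp_pos _), Real.log_exp, Real.rpow_neg (by norm_num : (0:ℝ) ≤ 2),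
      div_eq_mul_inv]
    rw [show -x * μ = -μ * x by ring]
    ring
  have h2 : ∀ t : ℝ, Real.exp (-x) ^ 2 / (4 * t) = (Real.exp (-2 * x) / 4) / t := by
    intro t
    rw [← Real.exp_nat_mul]
    rw [show ((2:ℕ):ℝ) * -x = -2 * x by push_cast; ring]
    rw [div_div]
  have h3 : (∫ t in Set.Ioi (0:ℝ), t ^ (-1 - μ) * Real.exp (-t - Real.exp (-x) ^ 2 / (4 * t)))
      = ∫ t in Set.Ioi (0:ℝ), t ^ (-1 - μ) * Real.exp (-t - (Real.exp (-2 * x) / 4) / t) := by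
    congr 1
    funext t
    rw [h2 t]
  rw [h3, h1]
  ring

/-- For every `μ ∈ ℝ`, the function `f(x) = K_μ(e^{-x})` is twice
differentiable and satisfies `f''(x) = (e^{-2x} + μ²) f(x)` for all `x`. -/
theorem macdonaldK_exp_neg_twice_differentiable_and_ode (μ : ℝ) :
    (∀ x : ℝ, DifferentiableAt ℝ (fun x => macdonaldK μ (Real.exp (-x))) x) ∧
    (∀ x : ℝ, DifferentiableAt ℝ (deriv (fun x => macdonaldK μ (Real.exp (-x)))) x) ∧
    (∀ x : ℝ, deriv (deriv (fun x => macdonaldK μ (Real.exp (-x)))) x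
      = (Real.exp (-2 * x) + μ ^ 2) * macdonaldK μ (Real.exp (-x))) := by
  have heq := macd_eq_Ff μ
  have hd1 : deriv (fun x => macdonaldK μ (Real.exp (-x))) = Ff1 μ := by
    rw [heq]; funext x; exact (hasDerivAt_Ff μ x).deriv
  refine ⟨?_, ?_, ?_⟩
  · intro x; rw [heq]; exact (hasDerivAt_Ff μ x).differentiableAt
  · intro x; rw [hd1]; exact (hasDerivAt_Ff1 μ x).differentiableAt
  · intro x
    rw [hd1, (hasDerivAt_Ff1 μ x).deriv, show macdonaldK μ (Real.exp (-x)) = Ff μ x from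
      congrFun heq x]
end

section
/- For all μ > 0, λ₁ > 0 and λ₂ ≥ 0, setting c = λ₂²/(2λ₁), one has e^{−λ₁} ∫_0^∞ e^{−t} t^{μ + c − 1/2} (2λ₁ + t)^{μ − c − 1/2} dt = (λ₁^{2μ+1} / 2) ∫_0^∞ exp(−(1/2)λ₂² s) · exp(−λ₁ coth(λ₁ s / 2)) · (sinh(λ₁ s / 2))^{−(2μ+1)} ds. -/
open Real

/-- For all `μ > 0`, `λ₁ > 0` and `λ₂ ≥ 0`, with `c = λ₂²/(2λ₁)`,
`e^{-λ₁} ∫_0^∞ e^{-t} t^{μ+c-1/2} (2λ₁+t)^{μ-c-1/2} dt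
  = (λ₁^{2μ+1}/2) ∫_0^∞ e^{-λ₂²s/2} e^{-λ₁ coth(λ₁ s/2)} (sinh(λ₁ s/2))^{-(2μ+1)} ds`. -/
theorem conditional_laplace_integral_identity (μ lam1 lam2 : ℝ)
    (hμ : 0 < μ) (h1 : 0 < lam1) (h2 : 0 ≤ lam2) :
    Real.exp (-lam1) *
        ∫ t in Set.Ioi (0 : ℝ),
          Real.exp (-t) * t ^ (μ + lam2 ^ 2 / (2 * lam1) - 1 / 2) *
            (2 * lam1 + t) ^ (μ - lam2 ^ 2 / (2 * lam1) - 1 / 2)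
      = (lam1 ^ (2 * μ + 1) / 2) *
        ∫ s in Set.Ioi (0 : ℝ),
          Real.exp (-(1 / 2) * lam2 ^ 2 * s) *
            Real.exp (-lam1 * (Real.cosh (lam1 * s / 2) / Real.sinh (lam1 * s / 2))) *
              (Real.sinh (lam1 * s / 2)) ^ (-(2 * μ + 1)) := by
  have h2l : (0:ℝ) < 2 * lam1 := by linarith
  set f : ℝ → ℝ := fun s => 2 * lam1 / (Real.exp (lam1 * s) - 1) with hfdef
  set f' : ℝ → ℝ :=
    fun s => -(2 * lam1 ^ 2 * Real.exp (lam1 * s) / (Real.exp (lam1 * s) - 1) ^ 2) with hf'def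
  have hE : ∀ s ∈ Set.Ioi (0:ℝ), 1 < Real.exp (lam1 * s) := by
    intro s hs
    have : 0 < lam1 * s := mul_pos h1 (Set.mem_Ioi.mp hs)
    simpa using Real.exp_lt_exp.mpr this
  -- derivative of f
  have hderiv : ∀ s ∈ Set.Ioi (0:ℝ), HasDerivAt f (f' s) s := by
    intro s hs
    have hEs := hE s hs
    have h0 : Real.exp (lam1 * s) - 1 ≠ 0 := by linarith
    have d0 : HasDerivAt (fun y : ℝ => lam1 * y) lam1 s := by
      simpa using (hasDerivAt_id s).const_mul lam1
    have d1 : HasDerivAt (fun y : ℝ => Real.exp (lam1 * y) - 1)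
        (Real.exp (lam1 * s) * lam1) s := d0.exp.sub_const 1
    have d2 := (d1.inv h0).const_mul (2 * lam1)
    have hfun : f = fun y : ℝ => 2 * lam1 * (Real.exp (lam1 * y) - 1)⁻¹ := by
      funext y; simp only [hfdef, div_eq_mul_inv]
    rw [hfun]
    refine d2.congr_deriv ?_
    rw [hf'def]
    field_simp
  -- bijectivity of f from (0,∞) to (0,∞)
  have hmapsf : Set.MapsTo f (Set.Ioi 0) (Set.Ioi 0) := by
    intro s hs
    have hEs := hE s hs
    exact Set.mem_Ioi.mpr (div_pos h2l (by linarith))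
  set g : ℝ → ℝ := fun t => Real.log (1 + 2 * lam1 / t) / lam1 with hgdef
  have hmapsg : Set.MapsTo g (Set.Ioi 0) (Set.Ioi 0) := by
    intro t ht
    have ht' : 0 < t := Set.mem_Ioi.mp ht
    have : (1:ℝ) < 1 + 2 * lam1 / t := by
      have := div_pos h2l ht'; linarith
    exact Set.mem_Ioi.mpr (div_pos (Real.log_pos this) h1)
  have hinv : Set.InvOn g f (Set.Ioi 0) (Set.Ioi 0) := by
    constructor
    · intro s hs
      have hEs := hE s hs
      have h0 : Real.exp (lam1 * s) - 1 ≠ 0 := by linarith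
      have h3 : 1 + 2 * lam1 / f s = Real.exp (lam1 * s) := by
        rw [hfdef]
        field_simp
        ring
      rw [hgdef]
      simp only [h3, Real.log_exp]
      field_simp
    · intro t ht
      have ht' : 0 < t := Set.mem_Ioi.mp ht
      have hpos : (0:ℝ) < 1 + 2 * lam1 / t := by
        have := div_pos h2l ht'; linarith
      have h3 : Real.exp (lam1 * g t) = 1 + 2 * lam1 / t := by
        rw [hgdef]
        rw [mul_div_cancel₀ _ h1.ne']
        exact Real.exp_log hpos
      rw [hfdef]
      simp only [h3]
      field_simp
      ring
  have hbij : Set.BijOn f (Set.Ioi 0) (Set.Ioi 0) := hinv.bijOn hmapsf hmapsg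
  have himg : f '' Set.Ioi 0 = Set.Ioi 0 := hbij.image_eq
  conv_lhs => rw [← himg,
    MeasureTheory.integral_image_eq_integral_abs_deriv_smul measurableSet_Ioi
      (fun s hs => (hderiv s hs).hasDerivWithinAt) hbij.injOn]
  rw [← MeasureTheory.integral_const_mul, ← MeasureTheory.integral_const_mul]
  apply MeasureTheory.setIntegral_congr_fun measurableSet_Ioi
  intro s hs
  have hs' : 0 < s := Set.mem_Ioi.mp hs
  set u : ℝ := Real.exp (lam1 * s / 2) with hudef
  have hu1 : 1 < u := by
    rw [hudef]
    have : 0 < lam1 * s / 2 := by positivity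
    simpa using Real.exp_lt_exp.mpr this
  have hu0 : 0 < u := by linarith
  have hEu : Real.exp (lam1 * s) = u ^ 2 := by
    rw [hudef, sq, ← Real.exp_add]
    congr 1; ring
  set v : ℝ := u ^ 2 - 1 with hvdef
  have hv : 0 < v := by
    rw [hvdef]; nlinarith
  have hfs : f s = 2 * lam1 / v := by rw [hfdef]; simp [hEu, hvdef]
  have hfs2 : 2 * lam1 + f s = 2 * lam1 * u ^ 2 / v := by
    rw [hfs]; field_simp; ring
  have hf's : |f' s| = 2 * lam1 ^ 2 * u ^ 2 / v ^ 2 := by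
    rw [hf'def]
    simp only [hEu, ← hvdef, abs_neg]
    rw [abs_of_pos (by positivity)]
  have hsinh : Real.sinh (lam1 * s / 2) = v / (2 * u) := by
    rw [Real.sinh_eq, Real.exp_neg, ← hudef, hvdef]
    field_simp
  have hcosh : Real.cosh (lam1 * s / 2) = (u ^ 2 + 1) / (2 * u) := by
    rw [Real.cosh_eq, Real.exp_neg, ← hudef]
    field_simp
  have hlogu : Real.log u = lam1 * s / 2 := by rw [hudef, Real.log_exp]
  -- now rewrite everything
  have hfspos : 0 < f s := by rw [hfs]; positivity
  have hfs2pos : 0 < 2 * lam1 + f s := by rw [hfs2]; positivity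
  have hsinhpos : 0 < Real.sinh (lam1 * s / 2) := by rw [hsinh]; positivity
  beta_reduce
  rw [show ∀ a b : ℝ, a • b = a * b from fun a b => rfl]
  rw [Real.rpow_def_of_pos hfspos, Real.rpow_def_of_pos hfs2pos,
    Real.rpow_def_of_pos hsinhpos, Real.rpow_def_of_pos h1,
    hfs2, hfs, hf's, hsinh, hcosh]
  rw [Real.log_div (by positivity) hv.ne', Real.log_div (by positivity) hv.ne',
    Real.log_div hv.ne' (by positivity),
    Real.log_mul (by norm_num) h1.ne', Real.log_mul (by positivity) (by positivity),
    Real.log_mul (by norm_num) h1.ne', Real.log_mul (by norm_num) hu0.ne',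
    Real.log_pow]
  rw [show (2 * lam1 ^ 2 * u ^ 2 / v ^ 2 : ℝ)
      = Real.exp (Real.log (2 * lam1 ^ 2 * u ^ 2 / v ^ 2)) from
    (Real.exp_log (by positivity)).symm]
  rw [Real.log_div (by positivity) (by positivity), Real.log_mul (by positivity) (by positivity),
    Real.log_mul (by norm_num) (by positivity), Real.log_pow, Real.log_pow, Real.log_pow]
  rw [← Real.exp_add, ← Real.exp_add, ← Real.exp_add, ← Real.exp_add, ← Real.exp_add,
    ← Real.exp_add]
  rw [show ((Real.exp (Real.log lam1 * (2 * μ + 1)) / 2 : ℝ)) =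
      Real.exp (Real.log lam1 * (2 * μ + 1)) * Real.exp (-Real.log 2) by
    rw [Real.exp_neg, Real.exp_log]; · ring
    · norm_num]
  simp only [← Real.exp_add]
  congr 1
  have hdiv : (u ^ 2 + 1) / (2 * u) / (v / (2 * u)) = (u ^ 2 + 1) / v := by
    field_simp
  rw [hdiv, hlogu]
  push_cast
  field_simp
  ring
end

section
/- Let a, b > 0 be real numbers. For integers n, m define c(n, m) = Γ(a+1)Γ(b+1)Γ(a+b+1)Γ(n+m+a+b+1) / (n! · m! · Γ(n+a+1)Γ(m+b+1)Γ(n+a+b+1)Γ(m+a+b+1)) if n ≥ 0 and m ≥ 0, and c(n, m) = 0 otherwise. Then c(0,0) = 1, and for all integers n, m ≥ 0 with (n, m) ≠ (0, 0), (n² + m² − nm + a n + b m) · c(n, m) = c(n−1, m) + c(n, m−1). -/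
open Real

/-- Bump's closed-form coefficients for the type `A₂` fundamental Whittaker function. -/
noncomputable def bumpCoeff (a b : ℝ) (n m : ℤ) : ℝ :=
  if 0 ≤ n ∧ 0 ≤ m then
    Real.Gamma (a + 1) * Real.Gamma (b + 1) * Real.Gamma (a + b + 1) *
        Real.Gamma ((n : ℝ) + (m : ℝ) + a + b + 1) /
      ((n.toNat).factorial * (m.toNat).factorial * Real.Gamma ((n : ℝ) + a + 1) *
        Real.Gamma ((m : ℝ) + b + 1) * Real.Gamma ((n : ℝ) + a + b + 1) *
        Real.Gamma ((m : ℝ) + a + b + 1))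
  else 0

lemma bump_symm (a b : ℝ) (n m : ℤ) : bumpCoeff a b n m = bumpCoeff b a m n := by
  unfold bumpCoeff
  by_cases h : 0 ≤ n ∧ 0 ≤ m
  · rw [if_pos h, if_pos ⟨h.2, h.1⟩,
      show (m:ℝ) + (n:ℝ) + b + a + 1 = (n:ℝ) + (m:ℝ) + a + b + 1 by ring,
      show (m:ℝ) + b + a + 1 = (m:ℝ) + a + b + 1 by ring,
      show (n:ℝ) + b + a + 1 = (n:ℝ) + a + b + 1 by ring]
    ring
  · rw [if_neg h, if_neg (by tauto)]

lemma bump_step (a b : ℝ) (ha : 0 < a) (hb : 0 < b) (k : ℕ) (m : ℤ) (hm : 0 ≤ m) :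
    ((k:ℝ) + 1 + (m:ℝ) + a + b) * bumpCoeff a b (k : ℤ) m
      = ((k:ℝ) + 1) * ((k:ℝ) + 1 + a) * ((k:ℝ) + 1 + a + b) * bumpCoeff a b ((k : ℤ) + 1) m := by
  lift m to ℕ using hm
  have hk : (0:ℤ) ≤ (k:ℤ) := Int.natCast_nonneg k
  have hm' : (0:ℤ) ≤ (m:ℤ) := Int.natCast_nonneg m
  rw [bumpCoeff, bumpCoeff, if_pos ⟨hk, hm'⟩, if_pos ⟨by linarith, hm'⟩]
  have h1 : ((k:ℤ)+1).toNat = k + 1 := by omega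
  have h2 : ((k:ℤ)).toNat = k := by omega
  have h3 : ((m:ℤ)).toNat = m := by omega
  rw [h1, h2, h3]
  push_cast
  have p1 : (0:ℝ) < (k:ℝ) + (m:ℝ) + a + b + 1 := by positivity
  have p2 : (0:ℝ) < (k:ℝ) + a + 1 := by positivity
  have p3 : (0:ℝ) < (k:ℝ) + a + b + 1 := by positivity
  have p4 : (0:ℝ) < (m:ℝ) + b + 1 := by positivity
  have p5 : (0:ℝ) < (m:ℝ) + a + b + 1 := by positivity
  have e1 : Real.Gamma ((k:ℝ) + 1 + (m:ℝ) + a + b + 1)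
      = ((k:ℝ) + (m:ℝ) + a + b + 1) * Real.Gamma ((k:ℝ) + (m:ℝ) + a + b + 1) := by
    rw [show (k:ℝ) + 1 + (m:ℝ) + a + b + 1 = ((k:ℝ) + (m:ℝ) + a + b + 1) + 1 by ring,
      Real.Gamma_add_one (ne_of_gt p1)]
  have e2 : Real.Gamma ((k:ℝ) + 1 + a + 1)
      = ((k:ℝ) + a + 1) * Real.Gamma ((k:ℝ) + a + 1) := by
    rw [show (k:ℝ) + 1 + a + 1 = ((k:ℝ) + a + 1) + 1 by ring,
      Real.Gamma_add_one (ne_of_gt p2)]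
  have e3 : Real.Gamma ((k:ℝ) + 1 + a + b + 1)
      = ((k:ℝ) + a + b + 1) * Real.Gamma ((k:ℝ) + a + b + 1) := by
    rw [show (k:ℝ) + 1 + a + b + 1 = ((k:ℝ) + a + b + 1) + 1 by ring,
      Real.Gamma_add_one (ne_of_gt p3)]
  rw [e1, e2, e3, Nat.factorial_succ]
  have hfk : ((k.factorial : ℝ)) ≠ 0 := Nat.cast_ne_zero.mpr k.factorial_ne_zero
  have hfm : ((m.factorial : ℝ)) ≠ 0 := Nat.cast_ne_zero.mpr m.factorial_ne_zero
  have hg2 := (Real.Gamma_pos_of_pos p2).ne'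
  have hg3 := (Real.Gamma_pos_of_pos p3).ne'
  have hg4 := (Real.Gamma_pos_of_pos p4).ne'
  have hg5 := (Real.Gamma_pos_of_pos p5).ne'
  push_cast
  field_simp
  ring

lemma bump_left (a b : ℝ) (ha : 0 < a) (hb : 0 < b) (n m : ℤ) (hn : 0 ≤ n) (hm : 0 ≤ m) :
    ((n:ℝ) + (m:ℝ) + a + b) * bumpCoeff a b (n - 1) m
      = (n:ℝ) * ((n:ℝ) + a) * ((n:ℝ) + a + b) * bumpCoeff a b n m := by
  rcases eq_or_lt_of_le hn with h | h
  · rw [← h]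
    simp [bumpCoeff]
  · obtain ⟨k, rfl⟩ : ∃ k : ℕ, n = (k : ℤ) + 1 := ⟨(n-1).toNat, by omega⟩
    have := bump_step a b ha hb k m hm
    push_cast
    push_cast at this
    simpa using this

/-- for `a, b > 0`, Bump's coefficients satisfy `c(0,0) = 1` and the
recursion `(n² + m² − nm + an + bm) c(n,m) = c(n−1,m) + c(n,m−1)` for all integers
`n, m ≥ 0` with `(n,m) ≠ (0,0)`. -/
theorem bump_recursion (a b : ℝ) (ha : 0 < a) (hb : 0 < b) :
    bumpCoeff a b 0 0 = 1 ∧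
    ∀ n m : ℤ, 0 ≤ n → 0 ≤ m → ¬(n = 0 ∧ m = 0) →
      ((n : ℝ) ^ 2 + (m : ℝ) ^ 2 - (n : ℝ) * (m : ℝ) + a * n + b * m) * bumpCoeff a b n m
        = bumpCoeff a b (n - 1) m + bumpCoeff a b n (m - 1) := by
  have hga := (Real.Gamma_pos_of_pos (show (0:ℝ) < a + 1 by linarith)).ne'
  have hgb := (Real.Gamma_pos_of_pos (show (0:ℝ) < b + 1 by linarith)).ne'
  have hgab := (Real.Gamma_pos_of_pos (show (0:ℝ) < a + b + 1 by linarith)).ne'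
  constructor
  · rw [bumpCoeff, if_pos ⟨le_refl 0, le_refl 0⟩]
    norm_num
    field_simp
    exact ⟨⟨hga, hgb⟩, hgab⟩
  · intro n m hn hm hnm
    have hL := bump_left a b ha hb n m hn hm
    have hM := bump_left b a hb ha m n hm hn
    rw [bump_symm b a m n, bump_symm b a (m-1) n] at hM
    have hD : ((n:ℝ) + (m:ℝ) + a + b) ≠ 0 := by
      have : (0:ℝ) ≤ (n:ℝ) := by exact_mod_cast hn
      have : (0:ℝ) ≤ (m:ℝ) := by exact_mod_cast hm
      nlinarith
    apply mul_left_cancel₀ hD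
    rw [mul_add, hL]
    rw [show ((m:ℝ) + (n:ℝ) + b + a) = ((n:ℝ) + (m:ℝ) + a + b) by ring] at hM
    rw [hM]
    ring
end
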